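/- For every a > 0, the petals Π_k(a) = {r e^{iθ} : 0 < r^p < a(1 + cos(pθ)), |2kπ/p - θ| < π/p} for 0 ≤ k ≤ p-1 together with the petals Π'_k(a) = {r e^{iθ} : 0 < r^p < a(1 - cos(pθ)), |(2k+1)π/p - θ| < π/p} for 0 ≤ k ≤ p-1 cover a punctured neighborhood of 0 in ℂ. -/

import Mathlib

/-- The petal `Π_k(a) = {r e^{iθ} : 0 < r^p < a(1 + cos(pθ)), |2kπ/p - θ| < π/p}`. -/
def petal (p : ℕ) (k : ℤ) (a : ℝ) : Set ℂ :=
  {z | ∃ r θ : ℝ, 0 < r ∧ z = (r : ℂ) * Complex.exp (θ * Complex.I) ∧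
    r ^ p < a * (1 + Real.cos (p * θ)) ∧ |2 * k * Real.pi / p - θ| < Real.pi / p}

/-- The petal `Π'_k(a) = {r e^{iθ} : 0 < r^p < a(1 - cos(pθ)), |(2k+1)π/p - θ| < π/p}`. -/
def petal' (p : ℕ) (k : ℤ) (a : ℝ) : Set ℂ :=
  {z | ∃ r θ : ℝ, 0 < r ∧ z = (r : ℂ) * Complex.exp (θ * Complex.I) ∧
    r ^ p < a * (1 - Real.cos (p * θ)) ∧ |(2 * k + 1) * Real.pi / p - θ| < Real.pi / p}

/-- For every `a > 0`, the petals `Π_k(a)` and `Π'_k(a)`,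
`0 ≤ k ≤ p - 1`, cover a punctured neighborhood of `0`. -/
theorem stmt_10 (p : ℕ) (hp : 1 ≤ p) (a : ℝ) (ha : 0 < a) :
    ∃ r : ℝ, 0 < r ∧ ∀ z : ℂ, z ≠ 0 → ‖z‖ < r →
      (∃ k : ℤ, 0 ≤ k ∧ k ≤ (p : ℤ) - 1 ∧ z ∈ petal p k a) ∨
      (∃ k : ℤ, 0 ≤ k ∧ k ≤ (p : ℤ) - 1 ∧ z ∈ petal' p k a) := by
  refine ⟨min a 1, lt_min ha one_pos, fun z hz hzr => ?_⟩
  have hp0 : (0:ℝ) < p := by exact_mod_cast hp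
  have hpZ : (0:ℤ) < p := by exact_mod_cast hp
  have hπ := Real.pi_pos
  set R := ‖z‖ with hR
  have hR0 : 0 < R := norm_pos_iff.mpr hz
  set θ₀ := Complex.arg z with hθ₀
  have hz' : z = (R : ℂ) * Complex.exp (θ₀ * Complex.I) :=
    (Complex.norm_mul_exp_arg_mul_I z).symm
  have hRp : R ^ p < a := by
    have h1 : R < 1 := lt_of_lt_of_le hzr (min_le_right _ _)
    have h2 : R < a := lt_of_lt_of_le hzr (min_le_left _ _)
    calc R ^ p ≤ R ^ 1 := pow_le_pow_of_le_one hR0.le h1.le hp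
    _ = R := pow_one R
    _ < a := h2
  by_cases hc : 0 ≤ Real.cos (p * θ₀)
  · -- petal case
    left
    set m : ℤ := round ((p:ℝ) * θ₀ / (2 * Real.pi)) with hm
    set d : ℝ := (p:ℝ) * θ₀ - 2 * m * Real.pi with hd
    have hcosd : Real.cos d = Real.cos ((p:ℝ) * θ₀) := by
      rw [show d = (p:ℝ) * θ₀ + (-m : ℤ) * (2 * Real.pi) by push_cast [hd]; ring,
        Real.cos_add_int_mul_two_pi]
    have hdle : |d| ≤ Real.pi := by
      have h := abs_sub_round ((p:ℝ) * θ₀ / (2 * Real.pi))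
      have h3 : d = ((p:ℝ) * θ₀ / (2 * Real.pi) - m) * (2 * Real.pi) := by
        field_simp [hd]
        ring
      rw [h3, abs_mul, abs_of_pos (by linarith : (0:ℝ) < 2 * Real.pi)]
      nlinarith
    have hdlt : |d| < Real.pi := by
      rcases lt_or_ge (|d|) (Real.pi / 2) with h | h
      · linarith
      · by_contra hcon
        push_neg at hcon
        rcases eq_or_lt_of_le h with h' | h'
        · exfalso; apply hcon.not_gt; rw [← h']; linarith
        · have : Real.cos (|d|) < 0 :=
            Real.cos_neg_of_pi_div_two_lt_of_lt h' (by linarith)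
          rw [Real.cos_abs, hcosd] at this
          linarith
    set k : ℤ := m % p with hk
    set q : ℤ := m / p with hq
    have hmeq : (p:ℤ) * q + k = m := Int.mul_ediv_add_emod m p
    have hmR : (m:ℝ) = p * q + k := by exact_mod_cast hmeq.symm
    refine ⟨k, Int.emod_nonneg m (by positivity), by
      have := Int.emod_lt_of_pos m hpZ; omega, ?_⟩
    set θ : ℝ := θ₀ - 2 * Real.pi * q with hθ
    have hcosθ : Real.cos ((p:ℝ) * θ) = Real.cos ((p:ℝ) * θ₀) := by
      rw [show (p:ℝ) * θ = (p:ℝ) * θ₀ + (-(p * q) : ℤ) * (2 * Real.pi) by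
        push_cast [hθ]; ring, Real.cos_add_int_mul_two_pi]
    refine ⟨R, θ, hR0, ?_, ?_, ?_⟩
    · rw [hz']
      congr 1
      have h1 : Complex.exp (((-q : ℤ) : ℂ) * (2 * (Real.pi : ℂ) * Complex.I)) = 1 :=
        Complex.exp_int_mul_two_pi_mul_I (-q)
      rw [show (θ:ℂ) * Complex.I =
          (θ₀:ℂ) * Complex.I + ((-q : ℤ) : ℂ) * (2 * (Real.pi : ℂ) * Complex.I) by
        push_cast [hθ]; ring, Complex.exp_add, h1, mul_one]
    · rw [hcosθ]
      nlinarith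
    · have hkR : (k:ℝ) = (m:ℝ) - p * q := by linarith
      have heq : 2 * (k:ℝ) * Real.pi / p - θ = -d / p := by
        rw [hd, hθ, hkR]
        field_simp
        ring
      rw [heq, abs_div, abs_neg, abs_of_pos hp0]
      gcongr
  · -- petal' case
    right
    push_neg at hc
    set m : ℤ := round (((p:ℝ) * θ₀ - Real.pi) / (2 * Real.pi)) with hm
    set d : ℝ := (p:ℝ) * θ₀ - (2 * m + 1) * Real.pi with hd
    have hcosd : Real.cos ((p:ℝ) * θ₀) = -Real.cos d := by
      rw [show (p:ℝ) * θ₀ = (d + Real.pi) + m * (2 * Real.pi) by push_cast [hd]; ring,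
        Real.cos_add_int_mul_two_pi, Real.cos_add_pi]
    have hdle : |d| ≤ Real.pi := by
      have h := abs_sub_round (((p:ℝ) * θ₀ - Real.pi) / (2 * Real.pi))
      have h3 : d = (((p:ℝ) * θ₀ - Real.pi) / (2 * Real.pi) - m) * (2 * Real.pi) := by
        field_simp [hd]
        ring
      rw [h3, abs_mul, abs_of_pos (by linarith : (0:ℝ) < 2 * Real.pi)]
      nlinarith
    have hcosdpos : 0 < Real.cos d := by
      rw [hcosd] at hc; linarith
    have hdlt : |d| < Real.pi := by
      rcases lt_or_ge (|d|) (Real.pi / 2) with h | h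
      · linarith
      · exfalso
        have : Real.cos (|d|) ≤ 0 :=
          Real.cos_nonpos_of_pi_div_two_le_of_le h (by linarith)
        rw [Real.cos_abs] at this
        linarith
    set k : ℤ := m % p with hk
    set q : ℤ := m / p with hq
    have hmeq : (p:ℤ) * q + k = m := Int.mul_ediv_add_emod m p
    have hmR : (m:ℝ) = p * q + k := by exact_mod_cast hmeq.symm
    refine ⟨k, Int.emod_nonneg m (by positivity), by
      have := Int.emod_lt_of_pos m hpZ; omega, ?_⟩
    set θ : ℝ := θ₀ - 2 * Real.pi * q with hθ
    have hcosθ : Real.cos ((p:ℝ) * θ) = Real.cos ((p:ℝ) * θ₀) := by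
      rw [show (p:ℝ) * θ = (p:ℝ) * θ₀ + (-(p * q) : ℤ) * (2 * Real.pi) by
        push_cast [hθ]; ring, Real.cos_add_int_mul_two_pi]
    refine ⟨R, θ, hR0, ?_, ?_, ?_⟩
    · rw [hz']
      congr 1
      have h1 : Complex.exp (((-q : ℤ) : ℂ) * (2 * (Real.pi : ℂ) * Complex.I)) = 1 :=
        Complex.exp_int_mul_two_pi_mul_I (-q)
      rw [show (θ:ℂ) * Complex.I =
          (θ₀:ℂ) * Complex.I + ((-q : ℤ) : ℂ) * (2 * (Real.pi : ℂ) * Complex.I) by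
        push_cast [hθ]; ring, Complex.exp_add, h1, mul_one]
    · rw [hcosθ]
      nlinarith
    · have hkR : (k:ℝ) = (m:ℝ) - p * q := by linarith
      have heq : (2 * (k:ℝ) + 1) * Real.pi / p - θ = -d / p := by
        rw [hd, hθ, hkR]
        field_simp
        ring
      rw [heq, abs_div, abs_neg, abs_of_pos hp0]
      gcongr
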